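/- Let K and R be real symmetric m×m matrices and γ > 0 such that R𝟙 = 0 and K + 2γR − γJ = (γ + 1)I, where J is the all-ones matrix. Then ker(K) = ker(R − μI), where μ = (γ + 1)/(2γ). -/

import Mathlib

open Matrix

/-- Let `K` and `R` be real symmetric `m × m` matrices and `γ > 0` such that `R𝟙 = 0` and
`K + 2γR − γJ = (γ + 1)I`, where `J` is the all-ones matrix. Then
`ker K = ker (R − μI)` where `μ = (γ + 1)/(2γ)`. -/
theorem ker_K_eq_ker_R_shift {m : ℕ} (K R : Matrix (Fin m) (Fin m) ℝ)
    (hK : K.IsSymm) (hR : R.IsSymm) (γ : ℝ) (hγ : 0 < γ)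
    (hones : R.mulVec (fun _ => 1) = 0)
    (hid : K + (2 * γ) • R - γ • (Matrix.of fun _ _ => (1 : ℝ))
      = (γ + 1) • (1 : Matrix (Fin m) (Fin m) ℝ))
    (μ : ℝ) (hμ : μ = (γ + 1) / (2 * γ)) :
    LinearMap.ker K.mulVecLin
      = LinearMap.ker (R - μ • (1 : Matrix (Fin m) (Fin m) ℝ)).mulVecLin := by
  have h2γ : (2 * γ) ≠ 0 := by positivity
  have hμpos : (0:ℝ) < μ := by rw [hμ]; positivity
  -- K in terms of R and J
  have hKdef : K = (γ + 1) • (1 : Matrix (Fin m) (Fin m) ℝ) - (2 * γ) • R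
      + γ • (Matrix.of fun _ _ => (1 : ℝ)) := by
    rw [← hid]; abel
  -- sum of R x is zero
  have hsumR : ∀ x : Fin m → ℝ, ∑ i, R.mulVec x i = 0 := by
    intro x
    have h1 : (fun _ => (1:ℝ)) ⬝ᵥ R.mulVec x = ((fun _ => (1:ℝ)) ᵥ* R) ⬝ᵥ x :=
      dotProduct_mulVec _ _ _
    have h2 : (fun _ => (1:ℝ)) ᵥ* R = R.mulVec (fun _ => 1) := by
      conv_lhs => rw [← hR.eq]
      rw [vecMul_transpose]
    simp only [h2, hones] at h1
    simpa [dotProduct] using h1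
  -- K x pointwise
  have hKx : ∀ (x : Fin m → ℝ) (i : Fin m),
      K.mulVec x i = (γ + 1) * x i - (2 * γ) * R.mulVec x i + γ * ∑ j, x j := by
    intro x i
    rw [hKdef]
    simp [mulVec, dotProduct, Matrix.one_apply, Finset.mul_sum, mul_sub, mul_add,
      Finset.sum_sub_distrib, Finset.sum_add_distrib, mul_comm]
    exact Finset.sum_congr rfl fun j _ => by ring
  ext x
  simp only [LinearMap.mem_ker, mulVecLin_apply, sub_mulVec, smul_mulVec, one_mulVec]
  constructor
  · intro hx
    -- sum of x is zero
    have hsum : ∑ j, x j = 0 := by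
      have h0 : ∑ i, K.mulVec x i = 0 := by rw [hx]; simp
      have h1 : ∑ i, K.mulVec x i
          = (γ + 1) * ∑ j, x j - (2*γ) * ∑ i, R.mulVec x i + (m : ℝ) * (γ * ∑ j, x j) := by
        simp only [hKx, Finset.sum_add_distrib, Finset.sum_sub_distrib, ← Finset.mul_sum]
        simp [Finset.sum_const]
        ring
      rw [hsumR x] at h1
      rw [h0] at h1
      have hpos : (0:ℝ) < γ + 1 + (m:ℝ) * γ := by positivity
      have : (γ + 1 + (m:ℝ) * γ) * ∑ j, x j = 0 := by linarith [h1]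
      exact (mul_eq_zero.mp this).resolve_left (ne_of_gt hpos)
    funext i
    have hKi : K.mulVec x i = 0 := by rw [hx]; rfl
    rw [hKx x i, hsum] at hKi
    have hRxi : R.mulVec x i = μ * x i := by
      rw [hμ]; field_simp; linarith
    simp [hRxi, smul_eq_mul]
  · intro hx
    have hRx : ∀ i, R.mulVec x i = μ * x i := by
      intro i
      have := congrFun hx i
      simp [smul_eq_mul] at this
      linarith
    have hsum : ∑ j, x j = 0 := by
      have h0 : ∑ i, R.mulVec x i = μ * ∑ j, x j := by
        simp only [hRx]; rw [Finset.mul_sum]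
      rw [hsumR x] at h0
      have := h0.symm
      exact (mul_eq_zero.mp this).resolve_left (ne_of_gt hμpos)
    funext i
    rw [hKx x i, hRx i, hsum, hμ]
    field_simp
    simp
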